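/- If C1 and C2 are proper cones, then both C1 ⊙ C2 and C1 ⊛ C2 are proper cones. -/

import Mathlib

open scoped TensorProduct
open TensorProduct

section Defs

variable {V V' V1 V2 : Type*}
  [AddCommGroup V] [Module ℝ V] [AddCommGroup V'] [Module ℝ V']
  [AddCommGroup V1] [Module ℝ V1] [AddCommGroup V2] [Module ℝ V2]

/-- The dual cone of a set `C`: linear functionals nonnegative on `C`. -/
def dualCone (C : Set V) : Set (Module.Dual ℝ V) := {f | ∀ x ∈ C, 0 ≤ f x}

/-- The functional `f ⊗ g` on `V1 ⊗ V2`. -/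
noncomputable def pairTensor (f : Module.Dual ℝ V1) (g : Module.Dual ℝ V2) :
    Module.Dual ℝ (V1 ⊗[ℝ] V2) :=
  (TensorProduct.lid ℝ ℝ).toLinearMap ∘ₗ TensorProduct.map f g

/-- The minimal tensor product of two cones: the convex hull of the product tensors. -/
def minTensor (C1 : Set V1) (C2 : Set V2) : Set (V1 ⊗[ℝ] V2) :=
  convexHull ℝ {z | ∃ x ∈ C1, ∃ y ∈ C2, z = x ⊗ₜ[ℝ] y}

/-- The maximal tensor product of two cones: tensors nonnegative on product functionals. -/
def maxTensor (C1 : Set V1) (C2 : Set V2) : Set (V1 ⊗[ℝ] V2) :=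
  {z | ∀ f ∈ dualCone C1, ∀ g ∈ dualCone C2, 0 ≤ pairTensor f g z}

/-- A cone: a set closed under multiplication by nonnegative scalars. -/
def IsConeSet (C : Set V) : Prop := ∀ x ∈ C, ∀ a : ℝ, 0 ≤ a → a • x ∈ C

/-- Topological closedness of a subset of a finite-dimensional real vector space,
expressed through (all) linear identifications with `Fin n → ℝ`. -/
def IsClosedSet (C : Set V) : Prop := ∀ (n : ℕ) (e : V ≃ₗ[ℝ] (Fin n → ℝ)), IsClosed (e '' C)

/-- A proper cone: convex, closed, salient and generating. -/
def IsProperCone (C : Set V) : Prop :=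
  Convex ℝ C ∧ IsClosedSet C ∧ IsConeSet C ∧ C ∩ (-C) = {0} ∧ Submodule.span ℝ C = ⊤

/-- A classical cone: the set of vectors with nonnegative coordinates in some basis,
i.e. the cone generated by a basis of the space. -/
def IsClassicalCone (C : Set V) : Prop :=
  ∃ (ι : Type) (b : Module.Basis ι ℝ V), C = {x | ∀ i, 0 ≤ b.repr x i}

/-- `C'` is a retract of `C` if there are positive maps `Φ, Ψ` with `Φ ∘ Ψ = id`. -/
def IsRetractOf (C' : Set V') (C : Set V) : Prop :=
  ∃ (Φ : V →ₗ[ℝ] V') (Ψ : V' →ₗ[ℝ] V),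
    (∀ x ∈ C, Φ x ∈ C') ∧ (∀ y ∈ C', Ψ y ∈ C) ∧ Φ ∘ₗ Ψ = LinearMap.id

/-- A polyhedral cone: the conical hull of finitely many vectors. -/
def IsPolyhedralCone (C : Set V) : Prop :=
  ∃ (k : ℕ) (v : Fin k → V),
    C = {x | ∃ c : Fin k → ℝ, (∀ i, 0 ≤ c i) ∧ x = ∑ i, c i • v i}

end Defs
section Aux1

open Module Set
open scoped RealInnerProductSpace

variable {V : Type*} [AddCommGroup V] [Module ℝ V]

lemma zero_mem_of_proper {C : Set V} (h : IsProperCone C) : (0 : V) ∈ C := by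
  have h0 : (0:V) ∈ ({0} : Set V) := rfl
  rw [← h.2.2.2.1] at h0
  exact h0.1

lemma isClosed_image_of_isClosedSet [FiniteDimensional ℝ V] {W : Type*} [NormedAddCommGroup W]
    [NormedSpace ℝ W] (e' : V ≃ₗ[ℝ] W) {C : Set V} (hC : IsClosedSet C) : IsClosed (e' '' C) := by
  set e0 := (Module.finBasis ℝ V).equivFun
  have h := hC _ e0
  have himg : e' '' C = (e0.symm.trans e') '' (e0 '' C) := by
    rw [Set.image_image]; ext w; simp
  rw [himg]
  exact ((e0.symm.trans e').toContinuousLinearEquiv).toHomeomorph.isClosedMap _ h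

lemma isClosedSet_of_isClosed_image {W : Type*} [NormedAddCommGroup W]
    [NormedSpace ℝ W] [FiniteDimensional ℝ W] (e' : V ≃ₗ[ℝ] W) {C : Set V}
    (h : IsClosed (e' '' C)) : IsClosedSet C := by
  intro n e
  have himg : e '' C = (e'.symm.trans e) '' (e' '' C) := by
    rw [Set.image_image]; ext w; simp
  rw [himg]
  exact ((e'.symm.trans e).toContinuousLinearEquiv).toHomeomorph.isClosedMap _ h

lemma image_convex {W : Type*} [AddCommGroup W] [Module ℝ W] (e' : V ≃ₗ[ℝ] W) {C : Set V}
    (h : Convex ℝ C) : Convex ℝ (e' '' C) := h.linear_image e'.toLinearMap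

lemma image_coneSet {W : Type*} [AddCommGroup W] [Module ℝ W] (e' : V ≃ₗ[ℝ] W) {C : Set V}
    (h : IsConeSet C) : IsConeSet (e' '' C) := by
  rintro p ⟨x, hx, rfl⟩ a ha
  exact ⟨a • x, h x hx a ha, map_smul e' a x⟩

lemma image_salient {W : Type*} [AddCommGroup W] [Module ℝ W] (e' : V ≃ₗ[ℝ] W) {C : Set V}
    (h : C ∩ (-C) = {0}) : (e' '' C) ∩ (-(e' '' C)) = {0} := by
  ext p
  constructor
  · rintro ⟨⟨x, hx, rfl⟩, hneg⟩
    have : -e' x ∈ e' '' C := Set.mem_neg.mp hneg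
    obtain ⟨y, hy, hxy⟩ := this
    have hyx : y = -x := by
      apply e'.injective
      rw [hxy, map_neg]
    have hxmem : x ∈ C ∩ (-C) := ⟨hx, by rw [Set.mem_neg]; rwa [hyx] at hy⟩
    rw [h] at hxmem
    simp [Set.mem_singleton_iff.mp hxmem]
  · rintro rfl
    have h0 : (0:V) ∈ C ∩ (-C) := by rw [h]; rfl
    refine ⟨⟨0, h0.1, map_zero e'⟩, ?_⟩
    rw [Set.mem_neg, neg_zero]
    exact ⟨0, h0.1, map_zero e'⟩

lemma image_span_top {W : Type*} [AddCommGroup W] [Module ℝ W] (e' : V ≃ₗ[ℝ] W) {C : Set V}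
    (h : Submodule.span ℝ C = ⊤) : Submodule.span ℝ (e' '' C) = ⊤ := by
  rw [Submodule.span_image_linearEquiv, h, Submodule.map_top]; exact LinearEquiv.range e'

end Aux1
section Aux2

open Module Set
open scoped RealInnerProductSpace

variable {V : Type*} [AddCommGroup V] [Module ℝ V]

/-- A linear identification of a finite-dimensional real vector space with Euclidean space. -/
noncomputable def euclidEquiv (V : Type*) [AddCommGroup V] [Module ℝ V] [FiniteDimensional ℝ V] :
    V ≃ₗ[ℝ] EuclideanSpace ℝ (Fin (Module.finrank ℝ V)) :=
  (Module.finBasis ℝ V).equivFun.trans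
    (EuclideanSpace.equiv (Fin (Module.finrank ℝ V)) ℝ).symm.toLinearEquiv

lemma add_mem_of_convex_cone {s : Set V} (hc : Convex ℝ s) (hs : IsConeSet s) {u v : V}
    (hu : u ∈ s) (hv : v ∈ s) : u + v ∈ s := by
  have hmid : (1/2 : ℝ) • u + (1/2 : ℝ) • v ∈ s :=
    hc hu hv (by norm_num) (by norm_num) (by norm_num)
  have := hs _ hmid 2 (by norm_num)
  simpa [smul_add, smul_smul] using this

variable {E : Type*} [NormedAddCommGroup E] [InnerProductSpace ℝ E] [FiniteDimensional ℝ E]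

/-- Package a closed salient convex cone as a `ConvexCone`. -/
noncomputable def setToCone (K : Set E) (hconv : Convex ℝ K) (hcone : IsConeSet K)
    (h0 : (0:E) ∈ K) : ConvexCone ℝ E where
  carrier := K
  smul_mem' := fun c hc x hx => hcone x hx c hc.le
  add_mem' := fun x hx y hy => add_mem_of_convex_cone hconv hcone hx hy

lemma euclid_bidual {K : Set E} (hconv : Convex ℝ K) (hcone : IsConeSet K)
    (hclosed : IsClosed K) (h0 : (0:E) ∈ K) {v : E}
    (hv : ∀ u : E, (∀ x ∈ K, 0 ≤ ⟪x, u⟫) → 0 ≤ ⟪u, v⟫) : v ∈ K := by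
  by_contra hvK
  obtain ⟨y, hy1, hy2⟩ := ProperCone.hyperplane_separation' (E := E) (x₀ := v)
    (⟨(setToCone K hconv hcone h0).toPointedCone h0, hclosed⟩ : ProperCone ℝ E) hvK
  have := hv y (fun x hx => hy1 x hx)
  rw [real_inner_comm] at this
  linarith

lemma euclid_span_dual {K : Set E} (hconv : Convex ℝ K) (hcone : IsConeSet K)
    (hclosed : IsClosed K) (hsal : K ∩ (-K) = {0}) :
    Submodule.span ℝ {u : E | ∀ x ∈ K, 0 ≤ ⟪x, u⟫} = ⊤ := by
  have h0 : (0:E) ∈ K := by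
    have : (0:E) ∈ ({0} : Set E) := rfl
    rw [← hsal] at this; exact this.1
  by_contra hne
  have hbot : ((Submodule.span ℝ {u : E | ∀ x ∈ K, 0 ≤ ⟪x, u⟫})ᗮ : Submodule ℝ E) ≠ ⊥ := by
    intro hb
    exact hne (Submodule.orthogonal_eq_bot_iff.mp hb)
  obtain ⟨v, hvmem, hvne⟩ := Submodule.exists_mem_ne_zero_of_ne_bot hbot
  have horth : ∀ u ∈ {u : E | ∀ x ∈ K, 0 ≤ ⟪x, u⟫}, ⟪u, v⟫ = 0 := by
    intro u hu
    exact (Submodule.mem_orthogonal _ v).mp hvmem u (Submodule.subset_span hu)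
  have hvK : v ∈ K := euclid_bidual hconv hcone hclosed h0 (fun u hu => (horth u hu).ge)
  have hvK' : -v ∈ K := by
    apply euclid_bidual hconv hcone hclosed h0
    intro u hu
    rw [inner_neg_right, horth u hu, neg_zero]
  have : v ∈ K ∩ (-K) := ⟨hvK, by rw [Set.mem_neg]; exact hvK'⟩
  rw [hsal] at this
  exact hvne this

lemma euclid_strict_pos {K : Set E} (hconv : Convex ℝ K)
    (hcone : IsConeSet K) (hclosed : IsClosed K) (hsal : K ∩ (-K) = {0}) :
    ∃ u : E, (∀ x ∈ K, 0 ≤ ⟪x, u⟫) ∧ ∀ x ∈ K, x ≠ 0 → 0 < ⟪x, u⟫ := by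
  set D : Set E := {u : E | ∀ x ∈ K, 0 ≤ ⟪x, u⟫} with hD
  have h0D : (0:E) ∈ D := by intro x hx; rw [inner_zero_right]
  have hDconv : Convex ℝ D := by
    intro u1 h1 u2 h2 a b ha hb hab x hx
    rw [inner_add_right, inner_smul_right, inner_smul_right]
    exact add_nonneg (mul_nonneg ha (h1 x hx)) (mul_nonneg hb (h2 x hx))
  have hspan : Submodule.span ℝ D = ⊤ := euclid_span_dual hconv hcone hclosed hsal
  have haff : affineSpan ℝ D = ⊤ := by
    rw [AffineSubspace.affineSpan_eq_top_iff_vectorSpan_eq_top_of_nonempty ℝ E E ⟨0, h0D⟩]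
    rw [eq_top_iff, ← hspan]
    apply Submodule.span_le.2
    intro d hd
    simpa using vsub_mem_vectorSpan ℝ hd h0D
  obtain ⟨u0, hu0⟩ := (hDconv.interior_nonempty_iff_affineSpan_eq_top).mpr haff
  refine ⟨u0, interior_subset hu0, ?_⟩
  intro x hx hxne
  rcases lt_or_eq_of_le (interior_subset hu0 x hx) with h | h
  · exact h
  · exfalso
    obtain ⟨ε, hε, hball⟩ := Metric.mem_nhds_iff.mp (mem_interior_iff_mem_nhds.mp hu0)
    have hxnorm : ‖x‖ ≠ 0 := norm_ne_zero_iff.mpr hxne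
    set u' := u0 - (ε / (2 * ‖x‖)) • x with hu'
    have hdiff : u' - u0 = -((ε / (2 * ‖x‖)) • x) := by rw [hu']; abel
    have hnormval : ‖u' - u0‖ = ε / 2 := by
      rw [hdiff, norm_neg, norm_smul, Real.norm_eq_abs,
        abs_of_pos (by positivity : (0:ℝ) < ε / (2 * ‖x‖))]
      field_simp
    have hu'mem : u' ∈ D := by
      apply hball
      rw [Metric.mem_ball, dist_eq_norm, hnormval]
      linarith
    have hcontra := hu'mem x hx
    rw [hu', inner_sub_right, inner_smul_right, ← h, zero_sub, neg_nonneg] at hcontra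
    have hpos : 0 < ε / (2 * ‖x‖) * ⟪x, x⟫ := by
      apply mul_pos (by positivity)
      rw [real_inner_self_eq_norm_mul_norm]
      positivity
    linarith

end Aux2
section Aux3

open Module Set
open scoped RealInnerProductSpace

variable {V : Type*} [AddCommGroup V] [Module ℝ V] [FiniteDimensional ℝ V]

/-- The linear functional `x ↦ ⟪u, e x⟫` obtained from a Euclidean vector. -/
noncomputable def innerFunctional (u : EuclideanSpace ℝ (Fin (Module.finrank ℝ V))) :
    Module.Dual ℝ V where
  toFun x := ⟪euclidEquiv V x, u⟫
  map_add' x y := by rw [map_add, inner_add_left]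
  map_smul' c x := by rw [map_smul, real_inner_smul_left]; rfl

@[simp] lemma innerFunctional_apply (u : EuclideanSpace ℝ (Fin (Module.finrank ℝ V))) (x : V) :
    innerFunctional u x = ⟪euclidEquiv V x, u⟫ := rfl

lemma mem_of_dualCone_nonneg {C : Set V} (h : IsProperCone C) {v : V}
    (hv : ∀ f ∈ dualCone C, 0 ≤ f v) : v ∈ C := by
  set eE := euclidEquiv V with heE
  set K := eE '' C with hK
  have hKconv := image_convex eE h.1
  have hKcone := image_coneSet eE h.2.2.1
  have hKclosed := isClosed_image_of_isClosedSet eE h.2.1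
  have hK0 : (0 : EuclideanSpace ℝ (Fin (Module.finrank ℝ V))) ∈ K :=
    ⟨0, zero_mem_of_proper h, map_zero eE⟩
  have hmem : eE v ∈ K := by
    apply euclid_bidual hKconv hKcone hKclosed hK0
    intro u hu
    have hf : innerFunctional u ∈ dualCone C := by
      intro x hx
      exact hu (eE x) ⟨x, hx, rfl⟩
    have := hv _ hf
    rw [innerFunctional_apply] at this
    rwa [real_inner_comm]
  obtain ⟨x, hx, hxe⟩ := hmem
  rwa [← eE.injective hxe]

lemma span_dualCone_top {C : Set V} (h : IsProperCone C) :
    Submodule.span ℝ (dualCone C) = ⊤ := by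
  by_contra hne
  set W := Submodule.span ℝ (dualCone C) with hW
  have hco : W.dualCoannihilator ≠ ⊥ := by
    intro hb
    have hfr := Subspace.finrank_add_finrank_dualCoannihilator_eq W
    rw [hb, finrank_bot, add_zero] at hfr
    apply hne
    apply Submodule.eq_top_of_finrank_eq
    rw [hfr, Subspace.dual_finrank_eq]
  obtain ⟨v, hvmem, hvne⟩ := Submodule.exists_mem_ne_zero_of_ne_bot hco
  have hvan : ∀ f ∈ W, f v = 0 := (Submodule.mem_dualCoannihilator v).mp hvmem
  have hv1 : v ∈ C := mem_of_dualCone_nonneg h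
    (fun f hf => (hvan f (Submodule.subset_span hf)).ge)
  have hv2 : -v ∈ C := by
    apply mem_of_dualCone_nonneg h
    intro f hf
    rw [map_neg, hvan f (Submodule.subset_span hf), neg_zero]
  have : v ∈ C ∩ (-C) := ⟨hv1, by rw [Set.mem_neg]; exact hv2⟩
  rw [h.2.2.2.1] at this
  exact hvne this

lemma exists_strict_functional {C : Set V} (h : IsProperCone C) :
    ∃ φ : Module.Dual ℝ V, (∀ x ∈ C, 0 ≤ φ x) ∧ ∀ x ∈ C, x ≠ 0 → 0 < φ x := by
  set eE := euclidEquiv V with heE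
  obtain ⟨u, hu1, hu2⟩ := euclid_strict_pos (image_convex eE h.1) (image_coneSet eE h.2.2.1)
    (isClosed_image_of_isClosedSet eE h.2.1) (image_salient eE h.2.2.2.1)
  refine ⟨innerFunctional u, ?_, ?_⟩
  · intro x hx
    exact hu1 (eE x) ⟨x, hx, rfl⟩
  · intro x hx hxne
    exact hu2 (eE x) ⟨x, hx, rfl⟩ (by simpa using hxne)

end Aux3
section Aux4

open Module Set

variable {V1 V2 : Type*} [AddCommGroup V1] [Module ℝ V1] [AddCommGroup V2] [Module ℝ V2]

lemma pairTensor_tmul (f : Module.Dual ℝ V1) (g : Module.Dual ℝ V2) (x : V1) (y : V2) :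
    pairTensor f g (x ⊗ₜ[ℝ] y) = f x * g y := by
  simp [pairTensor, smul_eq_mul]

/-- `pairTensor` as a bilinear map. -/
noncomputable def pairT :
    Module.Dual ℝ V1 →ₗ[ℝ] Module.Dual ℝ V2 →ₗ[ℝ] Module.Dual ℝ (V1 ⊗[ℝ] V2) :=
  LinearMap.mk₂ ℝ pairTensor
    (fun f f' g => TensorProduct.ext' fun x y => by
      simp [pairTensor_tmul, add_mul])
    (fun c f g => TensorProduct.ext' fun x y => by
      simp [pairTensor_tmul, smul_eq_mul, mul_assoc])
    (fun f g g' => TensorProduct.ext' fun x y => by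
      simp [pairTensor_tmul, mul_add])
    (fun c f g => TensorProduct.ext' fun x y => by
      simp [pairTensor_tmul, smul_eq_mul]; ring)

@[simp] lemma pairT_apply (f : Module.Dual ℝ V1) (g : Module.Dual ℝ V2) :
    pairT f g = pairTensor f g := rfl

lemma zero_mem_minTensor {C1 : Set V1} {C2 : Set V2} (h01 : (0:V1) ∈ C1) (h02 : (0:V2) ∈ C2) :
    (0 : V1 ⊗[ℝ] V2) ∈ minTensor C1 C2 :=
  subset_convexHull ℝ _ ⟨0, h01, 0, h02, by simp⟩

lemma zero_mem_maxTensor (C1 : Set V1) (C2 : Set V2) :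
    (0 : V1 ⊗[ℝ] V2) ∈ maxTensor C1 C2 := by
  intro f hf g hg
  rw [map_zero]

lemma minTensor_convex (C1 : Set V1) (C2 : Set V2) : Convex ℝ (minTensor C1 C2) :=
  convex_convexHull ℝ _

lemma maxTensor_convex (C1 : Set V1) (C2 : Set V2) : Convex ℝ (maxTensor C1 C2) := by
  intro z1 h1 z2 h2 a b ha hb hab f hf g hg
  rw [map_add, map_smul, map_smul]
  exact add_nonneg (smul_nonneg ha (h1 f hf g hg)) (smul_nonneg hb (h2 f hf g hg))

lemma maxTensor_coneSet (C1 : Set V1) (C2 : Set V2) : IsConeSet (maxTensor C1 C2) := by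
  intro z hz a ha f hf g hg
  rw [map_smul]
  exact smul_nonneg ha (hz f hf g hg)

lemma minTensor_coneSet {C1 : Set V1} {C2 : Set V2} (h1 : IsConeSet C1) :
    IsConeSet (minTensor C1 C2) := by
  intro z hz a ha
  have himg := (LinearMap.lsmul ℝ (V1 ⊗[ℝ] V2) a).image_convexHull
    {z : V1 ⊗[ℝ] V2 | ∃ x ∈ C1, ∃ y ∈ C2, z = x ⊗ₜ[ℝ] y}
  have hmem : a • z ∈ (LinearMap.lsmul ℝ (V1 ⊗[ℝ] V2) a) '' (minTensor C1 C2) :=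
    ⟨z, hz, rfl⟩
  rw [minTensor] at hmem
  rw [himg] at hmem
  apply convexHull_mono ?_ hmem
  rintro w ⟨w', ⟨x, hx, y, hy, rfl⟩, rfl⟩
  refine ⟨a • x, h1 x hx a ha, y, hy, ?_⟩
  simp [TensorProduct.smul_tmul']

lemma minTensor_subset_maxTensor {C1 : Set V1} {C2 : Set V2} :
    minTensor C1 C2 ⊆ maxTensor C1 C2 := by
  apply convexHull_min ?_ (maxTensor_convex C1 C2)
  rintro z ⟨x, hx, y, hy, rfl⟩ f hf g hg
  rw [pairTensor_tmul]
  exact mul_nonneg (hf x hx) (hg y hy)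

lemma span_minBase {C1 : Set V1} {C2 : Set V2} (h1 : Submodule.span ℝ C1 = ⊤)
    (h2 : Submodule.span ℝ C2 = ⊤) :
    Submodule.span ℝ {z : V1 ⊗[ℝ] V2 | ∃ x ∈ C1, ∃ y ∈ C2, z = x ⊗ₜ[ℝ] y} = ⊤ := by
  set W := Submodule.span ℝ {z : V1 ⊗[ℝ] V2 | ∃ x ∈ C1, ∃ y ∈ C2, z = x ⊗ₜ[ℝ] y} with hWdef
  have stepA : ∀ x ∈ C1, ∀ y : V2, x ⊗ₜ[ℝ] y ∈ W := by
    intro x hx y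
    have hsub : C2 ⊆ (Submodule.comap (TensorProduct.mk ℝ V1 V2 x) W : Set V2) :=
      fun y' hy' => Submodule.subset_span ⟨x, hx, y', hy', rfl⟩
    have hle := Submodule.span_le.mpr hsub
    rw [h2] at hle
    exact hle Submodule.mem_top
  have stepB : ∀ (x : V1) (y : V2), x ⊗ₜ[ℝ] y ∈ W := by
    intro x y
    have hsub : C1 ⊆ (Submodule.comap ((TensorProduct.mk ℝ V1 V2).flip y) W : Set V1) :=
      fun x' hx' => stepA x' hx' y
    have hle := Submodule.span_le.mpr hsub
    rw [h1] at hle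
    exact hle Submodule.mem_top
  rw [eq_top_iff, ← TensorProduct.span_tmul_eq_top ℝ V1 V2]
  apply Submodule.span_le.mpr
  rintro z ⟨m, n, rfl⟩
  exact stepB m n

lemma span_minTensor {C1 : Set V1} {C2 : Set V2} (h1 : Submodule.span ℝ C1 = ⊤)
    (h2 : Submodule.span ℝ C2 = ⊤) : Submodule.span ℝ (minTensor C1 C2) = ⊤ := by
  rw [eq_top_iff, ← span_minBase h1 h2]
  exact Submodule.span_mono (subset_convexHull ℝ _)

lemma maxTensor_salient [FiniteDimensional ℝ V1] [FiniteDimensional ℝ V2]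
    {C1 : Set V1} {C2 : Set V2} (h1 : IsProperCone C1) (h2 : IsProperCone C2) :
    maxTensor C1 C2 ∩ (-(maxTensor C1 C2)) = {0} := by
  ext z
  constructor
  · rintro ⟨hz1, hz2⟩
    rw [Set.mem_neg] at hz2
    have hzero : ∀ f ∈ dualCone C1, ∀ g ∈ dualCone C2, pairTensor f g z = 0 := by
      intro f hf g hg
      have ha := hz1 f hf g hg
      have hb := hz2 f hf g hg
      rw [map_neg] at hb
      linarith
    have hall1 : ∀ (f : Module.Dual ℝ V1), ∀ g ∈ dualCone C2, pairTensor f g z = 0 := by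
      have hsub : dualCone C1 ⊆ (⨅ g ∈ dualCone C2,
          LinearMap.ker ((Module.Dual.eval ℝ (V1 ⊗[ℝ] V2) z).comp
            ((pairT (V1 := V1) (V2 := V2)).flip g)) : Submodule ℝ (Module.Dual ℝ V1)) := by
        intro f hf
        rw [SetLike.mem_coe, Submodule.mem_iInf]
        intro g
        rw [Submodule.mem_iInf]
        intro hg
        rw [LinearMap.mem_ker]
        exact hzero f hf g hg
      have hle := Submodule.span_le.mpr hsub
      rw [span_dualCone_top h1] at hle
      intro f g hg
      have := hle (Submodule.mem_top : f ∈ ⊤)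
      rw [Submodule.mem_iInf] at this
      have := this g
      rw [Submodule.mem_iInf] at this
      exact this hg
    have hall2 : ∀ (f : Module.Dual ℝ V1) (g : Module.Dual ℝ V2), pairTensor f g z = 0 := by
      intro f
      have hsub : dualCone C2 ⊆ (LinearMap.ker ((Module.Dual.eval ℝ (V1 ⊗[ℝ] V2) z).comp
          (pairT f)) : Set (Module.Dual ℝ V2)) := by
        intro g hg
        rw [SetLike.mem_coe, LinearMap.mem_ker]
        exact hall1 f g hg
      have hle := Submodule.span_le.mpr hsub
      rw [span_dualCone_top h2] at hle
      intro g
      exact hle (Submodule.mem_top : g ∈ ⊤)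
    have hcoord : ∀ (ij : Fin (Module.finrank ℝ V1) × Fin (Module.finrank ℝ V2)),
        ((Module.finBasis ℝ V1).tensorProduct (Module.finBasis ℝ V2)).repr z ij = 0 := by
      rintro ⟨i, j⟩
      have hfun : ∀ (w : V1 ⊗[ℝ] V2),
          pairTensor ((Module.finBasis ℝ V1).coord i) ((Module.finBasis ℝ V2).coord j) w
          = ((Module.finBasis ℝ V1).tensorProduct (Module.finBasis ℝ V2)).repr w (i, j) := by
        intro w
        induction w using TensorProduct.induction_on with
        | zero => simp
        | tmul x y =>
            rw [pairTensor_tmul, Basis.tensorProduct_repr_tmul_apply]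
            simp [Basis.coord_apply, mul_comm]
        | add u v hu hv => rw [map_add, map_add, Finsupp.add_apply, hu, hv]
      rw [← hfun z]
      exact hall2 _ _
    have hrepr : ((Module.finBasis ℝ V1).tensorProduct (Module.finBasis ℝ V2)).repr z = 0 :=
      Finsupp.ext hcoord
    have hz0 : z = 0 := by
      have := congrArg ((Module.finBasis ℝ V1).tensorProduct (Module.finBasis ℝ V2)).repr.symm hrepr
      simpa using this
    exact hz0
  · rintro rfl
    refine ⟨zero_mem_maxTensor C1 C2, ?_⟩
    rw [Set.mem_neg, neg_zero]
    exact zero_mem_maxTensor C1 C2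

lemma maxTensor_isClosedSet (C1 : Set V1) (C2 : Set V2) :
    IsClosedSet (maxTensor C1 C2) := by
  intro n e
  have himg : e '' maxTensor C1 C2 = ⋂ (f ∈ dualCone C1), ⋂ (g ∈ dualCone C2),
      {w : Fin n → ℝ | 0 ≤ pairTensor f g (e.symm w)} := by
    ext w
    simp only [Set.mem_iInter, Set.mem_setOf_eq]
    constructor
    · rintro ⟨z, hz, rfl⟩
      intro f hf g hg
      rw [e.symm_apply_apply]
      exact hz f hf g hg
    · intro hw
      exact ⟨e.symm w, fun f hf g hg => hw f hf g hg, e.apply_symm_apply w⟩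
  rw [himg]
  apply isClosed_biInter; intro f hf
  apply isClosed_biInter; intro g hg
  have hcont : Continuous fun w : Fin n → ℝ => pairTensor f g (e.symm w) :=
    ((pairTensor f g).comp e.symm.toLinearMap).continuous_of_finiteDimensional
  exact isClosed_le continuous_const hcont

end Aux4
section Aux5

open Module Set

lemma compact_base {V : Type*} [AddCommGroup V] [Module ℝ V] [FiniteDimensional ℝ V]
    {C : Set V} (h : IsProperCone C) (φ : Module.Dual ℝ V)
    (hφs : ∀ x ∈ C, x ≠ 0 → 0 < φ x) :
    IsCompact ((euclidEquiv V) '' {x | x ∈ C ∧ φ x = 1}) := by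
  set eE := euclidEquiv V with heE
  set K := eE '' C with hK
  have hKclosed : IsClosed K := isClosed_image_of_isClosedSet eE h.2.1
  have hKcone : IsConeSet K := image_coneSet eE h.2.2.1
  set ψ : EuclideanSpace ℝ (Fin (Module.finrank ℝ V)) →ₗ[ℝ] ℝ :=
    φ ∘ₗ eE.symm.toLinearMap with hψ
  have hψc : Continuous ψ := ψ.continuous_of_finiteDimensional
  have hψval : ∀ x : V, ψ (eE x) = φ x := by
    intro x; simp [hψ]
  have hψK : ∀ p ∈ K, p ≠ 0 → 0 < ψ p := by
    rintro p ⟨x, hx, rfl⟩ hpne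
    rw [hψval]
    exact hφs x hx (fun h0 => hpne (by rw [h0, map_zero]))
  -- the image set equals K ∩ ψ ⁻¹' {1}
  have himg : eE '' {x | x ∈ C ∧ φ x = 1} = K ∩ ψ ⁻¹' {1} := by
    ext p
    constructor
    · rintro ⟨x, ⟨hx, hφx⟩, rfl⟩
      exact ⟨⟨x, hx, rfl⟩, by rw [Set.mem_preimage, hψval, hφx]; rfl⟩
    · rintro ⟨⟨x, hx, rfl⟩, hp⟩
      refine ⟨x, ⟨hx, ?_⟩, rfl⟩
      rw [Set.mem_preimage] at hp
      rw [← hψval]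
      exact hp
  have hclosedB : IsClosed (eE '' {x | x ∈ C ∧ φ x = 1}) := by
    rw [himg]
    exact hKclosed.inter (isClosed_singleton.preimage hψc)
  -- boundedness
  rcases eq_or_ne ({x | x ∈ C ∧ φ x = 1} : Set V) ∅ with hemp | hne
  · rw [hemp, Set.image_empty]
    exact isCompact_empty
  obtain ⟨x0, hx0⟩ := Set.nonempty_iff_ne_empty.mpr hne
  have hx0ne : x0 ≠ 0 := by
    intro h0
    have h2 := hx0.2
    rw [h0, map_zero] at h2
    exact one_ne_zero h2.symm
  set Sigs := K ∩ Metric.sphere (0 : EuclideanSpace ℝ (Fin (Module.finrank ℝ V))) 1 with hSig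
  have hSigc : IsCompact Sigs := (isCompact_sphere _ 1).inter_left hKclosed
  have hSigne : Sigs.Nonempty := by
    have hp0 : eE x0 ≠ 0 := fun h0 => hx0ne (by simpa using congrArg eE.symm h0)
    refine ⟨‖eE x0‖⁻¹ • eE x0, hKcone _ ⟨x0, hx0.1, rfl⟩ _ (inv_nonneg.mpr (norm_nonneg _)), ?_⟩
    rw [mem_sphere_zero_iff_norm, norm_smul, norm_inv, norm_norm,
      inv_mul_cancel₀ (norm_ne_zero_iff.mpr hp0)]
  obtain ⟨m, hmSg, hmmin⟩ := hSigc.exists_isMinOn hSigne hψc.continuousOn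
  have hmne : m ≠ 0 := by
    intro h0
    have := hmSg.2
    rw [h0, mem_sphere_zero_iff_norm, norm_zero] at this
    exact one_ne_zero this.symm
  have hcpos : 0 < ψ m := hψK m hmSg.1 hmne
  have hbdd : eE '' {x | x ∈ C ∧ φ x = 1} ⊆ Metric.closedBall 0 (ψ m)⁻¹ := by
    rintro p ⟨x, ⟨hx, hφx⟩, rfl⟩
    have hψp : ψ (eE x) = 1 := by rw [hψval, hφx]
    have hpne : eE x ≠ 0 := fun h0 => by rw [h0, map_zero] at hψp; exact one_ne_zero hψp.symm
    have hpnorm : ‖eE x‖ ≠ 0 := norm_ne_zero_iff.mpr hpne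
    have hqSg : ‖eE x‖⁻¹ • eE x ∈ Sigs := by
      refine ⟨hKcone _ ⟨x, hx, rfl⟩ _ (inv_nonneg.mpr (norm_nonneg _)), ?_⟩
      rw [mem_sphere_zero_iff_norm, norm_smul, norm_inv, norm_norm, inv_mul_cancel₀ hpnorm]
    have hle : ψ m ≤ ψ (‖eE x‖⁻¹ • eE x) := hmmin hqSg
    rw [map_smul, hψp, smul_eq_mul, mul_one] at hle
    have h2 := inv_anti₀ hcpos hle
    rw [inv_inv] at h2
    rw [Metric.mem_closedBall, dist_zero_right]
    exact h2
  rw [Metric.isCompact_iff_isClosed_bounded]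
  exact ⟨hclosedB, Metric.isBounded_closedBall.subset hbdd⟩

end Aux5
section Aux6

open Module Set

variable {V1 V2 : Type*} [AddCommGroup V1] [Module ℝ V1] [AddCommGroup V2] [Module ℝ V2]

lemma tensor_subsingleton_left [Subsingleton V1] : Subsingleton (V1 ⊗[ℝ] V2) := by
  constructor
  have hzero : ∀ z : V1 ⊗[ℝ] V2, z = 0 := by
    intro z
    induction z using TensorProduct.induction_on with
    | zero => rfl
    | tmul x y => rw [Subsingleton.elim x 0, TensorProduct.zero_tmul]
    | add u v hu hv => rw [hu, hv, add_zero]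
  intro a b
  rw [hzero a, hzero b]

lemma tensor_subsingleton_right [Subsingleton V2] : Subsingleton (V1 ⊗[ℝ] V2) := by
  constructor
  have hzero : ∀ z : V1 ⊗[ℝ] V2, z = 0 := by
    intro z
    induction z using TensorProduct.induction_on with
    | zero => rfl
    | tmul x y => rw [Subsingleton.elim y 0, TensorProduct.tmul_zero]
    | add u v hu hv => rw [hu, hv, add_zero]
  intro a b
  rw [hzero a, hzero b]

lemma isProperCone_of_subsingleton {V : Type*} [AddCommGroup V] [Module ℝ V] [Subsingleton V]
    {C : Set V} (h0 : (0:V) ∈ C) : IsProperCone C := by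
  have hC : C = {0} := by
    ext x
    simp only [Set.mem_singleton_iff]
    exact ⟨fun _ => Subsingleton.elim x 0, fun _ => (Subsingleton.elim (0:V) x) ▸ h0⟩
  refine ⟨?_, ?_, ?_, ?_, ?_⟩
  · rw [hC]; exact convex_singleton 0
  · intro n e
    apply Set.Subsingleton.isClosed
    rintro a ⟨x, -, rfl⟩ b ⟨y, -, rfl⟩
    rw [Subsingleton.elim x y]
  · intro x hx a _
    rwa [Subsingleton.elim (a • x) x]
  · rw [hC]
    ext x
    simp [Subsingleton.elim x (0:V)]
  · apply Subsingleton.elim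

lemma minTensor_isClosedSet [FiniteDimensional ℝ V1] [FiniteDimensional ℝ V2]
    {C1 : Set V1} {C2 : Set V2} (h1 : IsProperCone C1) (h2 : IsProperCone C2) :
    IsClosedSet (minTensor C1 C2) := by
  classical
  rcases subsingleton_or_nontrivial V1 with hV1 | hV1
  · have : Subsingleton (V1 ⊗[ℝ] V2) := tensor_subsingleton_left
    intro n e
    apply Set.Subsingleton.isClosed
    rintro a ⟨x, -, rfl⟩ b ⟨y, -, rfl⟩
    rw [Subsingleton.elim x y]
  rcases subsingleton_or_nontrivial V2 with hV2 | hV2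
  · have : Subsingleton (V1 ⊗[ℝ] V2) := tensor_subsingleton_right
    intro n e
    apply Set.Subsingleton.isClosed
    rintro a ⟨x, -, rfl⟩ b ⟨y, -, rfl⟩
    rw [Subsingleton.elim x y]
  obtain ⟨φ1, hφ1n, hφ1s⟩ := exists_strict_functional h1
  obtain ⟨φ2, hφ2n, hφ2s⟩ := exists_strict_functional h2
  set B1 := {x : V1 | x ∈ C1 ∧ φ1 x = 1} with hB1def
  set B2 := {y : V2 | y ∈ C2 ∧ φ2 y = 1} with hB2def
  set K := {z : V1 ⊗[ℝ] V2 | ∃ x ∈ B1, ∃ y ∈ B2, z = x ⊗ₜ[ℝ] y} with hKdef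
  -- nonzero elements
  have hx0 : ∃ x ∈ C1, x ≠ (0:V1) := by
    by_contra hco
    push_neg at hco
    have hsub : C1 ⊆ {0} := fun x hx => hco x hx
    have hle : Submodule.span ℝ C1 ≤ ⊥ := by
      rw [← Submodule.span_zero_singleton (R := ℝ) (M := V1)]
      exact Submodule.span_mono hsub
    rw [h1.2.2.2.2] at hle
    obtain ⟨v, hvne⟩ := exists_ne (0:V1)
    exact hvne ((Submodule.mem_bot ℝ).mp (hle Submodule.mem_top))
  obtain ⟨x0, hx0C, hx0ne⟩ := hx0
  have hy0 : ∃ y ∈ C2, y ≠ (0:V2) := by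
    by_contra hco
    push_neg at hco
    have hsub : C2 ⊆ {0} := fun y hy => hco y hy
    have hle : Submodule.span ℝ C2 ≤ ⊥ := by
      rw [← Submodule.span_zero_singleton (R := ℝ) (M := V2)]
      exact Submodule.span_mono hsub
    rw [h2.2.2.2.2] at hle
    obtain ⟨v, hvne⟩ := exists_ne (0:V2)
    exact hvne ((Submodule.mem_bot ℝ).mp (hle Submodule.mem_top))
  obtain ⟨y0, hy0C, hy0ne⟩ := hy0
  have hB1x : (φ1 x0)⁻¹ • x0 ∈ B1 := by
    have hp : 0 < φ1 x0 := hφ1s x0 hx0C hx0ne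
    exact ⟨h1.2.2.1 x0 hx0C _ (inv_nonneg.mpr hp.le),
      by rw [map_smul, smul_eq_mul, inv_mul_cancel₀ hp.ne']⟩
  have hB2y : (φ2 y0)⁻¹ • y0 ∈ B2 := by
    have hp : 0 < φ2 y0 := hφ2s y0 hy0C hy0ne
    exact ⟨h2.2.2.1 y0 hy0C _ (inv_nonneg.mpr hp.le),
      by rw [map_smul, smul_eq_mul, inv_mul_cancel₀ hp.ne']⟩
  set k0 : V1 ⊗[ℝ] V2 := ((φ1 x0)⁻¹ • x0) ⊗ₜ[ℝ] ((φ2 y0)⁻¹ • y0) with hk0def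
  have hk0K : k0 ∈ K := ⟨_, hB1x, _, hB2y, rfl⟩
  have hKS0 : K ⊆ {z : V1 ⊗[ℝ] V2 | ∃ x ∈ C1, ∃ y ∈ C2, z = x ⊗ₜ[ℝ] y} := by
    rintro z ⟨x, hx, y, hy, rfl⟩
    exact ⟨x, hx.1, y, hy.1, rfl⟩
  set H := pairTensor φ1 φ2 with hHdef
  have hHK : ∀ κ ∈ K, H κ = 1 := by
    rintro κ ⟨x, hx, y, hy, rfl⟩
    rw [hHdef, pairTensor_tmul, hx.2, hy.2, mul_one]
  set N := Module.finrank ℝ (V1 ⊗[ℝ] V2) + 1 with hNdef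
  -- elementary decomposition of a scaled pure tensor
  have ELEM : ∀ (c : ℝ), 0 ≤ c → ∀ x ∈ C1, ∀ y ∈ C2,
      ∃ a : ℝ, 0 ≤ a ∧ ∃ κ ∈ K, c • (x ⊗ₜ[ℝ] y) = a • κ := by
    intro c hc x hx y hy
    rcases eq_or_ne (φ1 x) 0 with hp | hp
    · have hx0' : x = 0 := by
        by_contra hne
        exact (hφ1s x hx hne).ne' hp
      exact ⟨0, le_refl 0, k0, hk0K,
        by rw [hx0', TensorProduct.zero_tmul, smul_zero, zero_smul]⟩
    rcases eq_or_ne (φ2 y) 0 with hq | hq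
    · have hy0' : y = 0 := by
        by_contra hne
        exact (hφ2s y hy hne).ne' hq
      exact ⟨0, le_refl 0, k0, hk0K,
        by rw [hy0', TensorProduct.tmul_zero, smul_zero, zero_smul]⟩
    have hppos : 0 < φ1 x := (hφ1n x hx).lt_of_ne (Ne.symm hp)
    have hqpos : 0 < φ2 y := (hφ2n y hy).lt_of_ne (Ne.symm hq)
    refine ⟨c * (φ1 x * φ2 y), by positivity,
      ((φ1 x)⁻¹ • x) ⊗ₜ[ℝ] ((φ2 y)⁻¹ • y),
      ⟨_, ⟨h1.2.2.1 x hx _ (inv_nonneg.mpr hppos.le),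
          by rw [map_smul, smul_eq_mul, inv_mul_cancel₀ hp]⟩,
       _, ⟨h2.2.2.1 y hy _ (inv_nonneg.mpr hqpos.le),
          by rw [map_smul, smul_eq_mul, inv_mul_cancel₀ hq]⟩, rfl⟩, ?_⟩
    have hfac : ((φ1 x)⁻¹ • x) ⊗ₜ[ℝ] ((φ2 y)⁻¹ • y)
        = ((φ2 y)⁻¹ * (φ1 x)⁻¹) • (x ⊗ₜ[ℝ] y) := by
      rw [TensorProduct.tmul_smul, TensorProduct.smul_tmul', smul_smul, TensorProduct.smul_tmul']
    have hs : c * (φ1 x * φ2 y) * ((φ2 y)⁻¹ * (φ1 x)⁻¹) = c := by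
      field_simp
    rw [hfac, smul_smul, hs]
  -- Carathéodory-type representation
  have REP : ∀ z ∈ minTensor C1 C2, ∃ (a : Fin N → ℝ) (κ : Fin N → (V1 ⊗[ℝ] V2)),
      (∀ i, 0 ≤ a i) ∧ (∀ i, κ i ∈ K) ∧ z = ∑ i, a i • κ i := by
    intro z hz
    obtain ⟨ι, hι, zv, w, hrange, hai, hpos, hsum, hrep⟩ :=
      eq_pos_convex_span_of_mem_convexHull hz
    have hcard : Fintype.card ι ≤ N := by
      refine hai.card_le_finrank_succ.trans ?_
      exact Nat.add_le_add_right (Submodule.finrank_le _) 1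
    set emb : ι ↪ Fin N := (Fintype.equivFin ι).toEmbedding.trans (Fin.castLEEmb hcard)
      with hembdef
    have hchoice : ∀ i : ι, ∃ a : ℝ, 0 ≤ a ∧ ∃ κ ∈ K, w i • zv i = a • κ := by
      intro i
      obtain ⟨x, hx, y, hy, hzv⟩ := hrange (Set.mem_range_self i)
      rw [hzv]
      exact ELEM (w i) (hpos i).le x hx y hy
    choose a' ha' κ' hκ' heq' using hchoice
    refine ⟨fun j => if h : ∃ i, emb i = j then a' h.choose else 0,
            fun j => if h : ∃ i, emb i = j then κ' h.choose else k0, ?_, ?_, ?_⟩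
    · intro j
      dsimp only
      by_cases h : ∃ i, emb i = j
      · rw [dif_pos h]; exact ha' _
      · rw [dif_neg h]
    · intro j
      dsimp only
      by_cases h : ∃ i, emb i = j
      · rw [dif_pos h]; exact hκ' _
      · rw [dif_neg h]; exact hk0K
    · have hzero : ∀ j ∈ Finset.univ, j ∉ Finset.univ.map emb →
          (if h : ∃ i, emb i = j then a' h.choose else 0) •
            (if h : ∃ i, emb i = j then κ' h.choose else k0) = 0 := by
        intro j _ hj
        have hnex : ¬ ∃ i, emb i = j := by
          rintro ⟨i, hi⟩
          exact hj (Finset.mem_map.mpr ⟨i, Finset.mem_univ i, hi⟩)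
        rw [dif_neg hnex, zero_smul]
      have hcalc : (∑ j : Fin N, (if h : ∃ i, emb i = j then a' h.choose else 0) •
          (if h : ∃ i, emb i = j then κ' h.choose else k0)) = z := by
        rw [← Finset.sum_subset (Finset.subset_univ (Finset.univ.map emb)) hzero]
        rw [Finset.sum_map]
        have hsel : ∀ i : ι, (if h : ∃ i', emb i' = emb i then a' h.choose else 0) •
            (if h : ∃ i', emb i' = emb i then κ' h.choose else k0) = w i • zv i := by
          intro i
          have hex : ∃ i', emb i' = emb i := ⟨i, rfl⟩
          have hch : hex.choose = i := emb.injective hex.choose_spec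
          rw [dif_pos hex, dif_pos hex, hch, ← heq' i]
        rw [Finset.sum_congr rfl (fun i _ => hsel i)]
        exact hrep
      exact hcalc.symm
  -- membership of representation sums
  have TMEM : ∀ (a : Fin N → ℝ) (κ : Fin N → (V1 ⊗[ℝ] V2)), (∀ i, 0 ≤ a i) →
      (∀ i, κ i ∈ K) → (∑ i, a i • κ i) ∈ minTensor C1 C2 := by
    intro a κ ha hκ
    apply Finset.sum_induction
    · exact fun u v hu hv => add_mem_of_convex_cone (minTensor_convex C1 C2)
        (minTensor_coneSet h1.2.2.1) hu hv
    · exact zero_mem_minTensor (zero_mem_of_proper h1) (zero_mem_of_proper h2)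
    · intro i _
      exact minTensor_coneSet h1.2.2.1 _ (subset_convexHull ℝ _ (hKS0 (hκ i))) _ (ha i)
  -- compact bases
  have hB1c : IsCompact ((euclidEquiv V1) '' B1) := compact_base h1 φ1 hφ1s
  have hB2c : IsCompact ((euclidEquiv V2) '' B2) := compact_base h2 φ2 hφ2s
  -- topology
  intro n e
  set e1 := euclidEquiv V1 with he1
  set e2 := euclidEquiv V2 with he2
  set Gbil : EuclideanSpace ℝ (Fin (Module.finrank ℝ V1)) →ₗ[ℝ]
      EuclideanSpace ℝ (Fin (Module.finrank ℝ V2)) →ₗ[ℝ] (Fin n → ℝ) :=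
    LinearMap.mk₂ ℝ (fun p q => e (e1.symm p ⊗ₜ[ℝ] e2.symm q))
      (fun p p' q => by rw [map_add, TensorProduct.add_tmul, map_add])
      (fun c p q => by rw [map_smul, ← TensorProduct.smul_tmul', map_smul])
      (fun p q q' => by rw [map_add, TensorProduct.tmul_add, map_add])
      (fun c p q => by rw [map_smul, TensorProduct.tmul_smul, map_smul]) with hGbildef
  have hGcont : Continuous (fun pq : _ × _ => Gbil pq.1 pq.2) :=
    (LinearMap.toContinuousLinearMap
      ((LinearMap.toContinuousLinearMap).toLinearMap.comp Gbil)).continuous₂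
  set KW := (fun pq : _ × _ => Gbil pq.1 pq.2) '' ((e1 '' B1) ×ˢ (e2 '' B2)) with hKWdef
  have hKWc : IsCompact KW := (hB1c.prod hB2c).image hGcont
  have hKWK : KW = e '' K := by
    ext p
    constructor
    · rintro ⟨⟨p1, p2⟩, ⟨⟨x, hx, rfl⟩, ⟨y, hy, rfl⟩⟩, rfl⟩
      refine ⟨x ⊗ₜ[ℝ] y, ⟨x, hx, y, hy, rfl⟩, ?_⟩
      simp [hGbildef]
    · rintro ⟨κ, ⟨x, hx, y, hy, rfl⟩, rfl⟩
      refine ⟨(e1 x, e2 y), ⟨⟨x, hx, rfl⟩, ⟨y, hy, rfl⟩⟩, ?_⟩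
      simp [hGbildef]
  apply isClosed_of_closure_subset
  intro p hp
  obtain ⟨u, hu, hulim⟩ := mem_closure_iff_seq_limit.mp hp
  set HW : (Fin n → ℝ) →ₗ[ℝ] ℝ := H ∘ₗ e.symm.toLinearMap with hHWdef
  have hHWc : Continuous HW := HW.continuous_of_finiteDimensional
  set c := HW p + 1 with hcdef
  have hev : ∀ᶠ j in Filter.atTop, HW (u j) ≤ c := by
    apply Filter.Tendsto.eventually_le_const (lt_add_one (HW p))
    exact (hHWc.tendsto p).comp hulim
  set Tc := (fun aκ : (Fin N → ℝ) × (Fin N → (Fin n → ℝ)) => ∑ i, aκ.1 i • aκ.2 i) ''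
      ((Set.univ.pi fun _ : Fin N => Set.Icc (0:ℝ) c) ×ˢ
        (Set.univ.pi fun _ : Fin N => KW)) with hTcdef
  have hTcc : IsCompact Tc := by
    apply IsCompact.image
    · exact (isCompact_univ_pi fun _ => isCompact_Icc).prod (isCompact_univ_pi fun _ => hKWc)
    · apply continuous_finset_sum
      intro i _
      exact ((continuous_apply i).comp continuous_fst).smul
        ((continuous_apply i).comp continuous_snd)
  have humem : ∀ᶠ j in Filter.atTop, u j ∈ Tc := by
    filter_upwards [hev] with j hj
    obtain ⟨z, hzmin, hze⟩ := hu j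
    obtain ⟨a, κ, ha, hκ, hsum⟩ := REP z hzmin
    have hHz : HW (u j) = ∑ i, a i := by
      rw [← hze]
      have : HW (e z) = H z := by simp [hHWdef]
      rw [this, hsum, map_sum]
      apply Finset.sum_congr rfl
      intro i _
      rw [map_smul, hHK _ (hκ i), smul_eq_mul, mul_one]
    refine ⟨(a, fun i => e (κ i)), ⟨?_, ?_⟩, ?_⟩
    · intro i _
      refine ⟨ha i, ?_⟩
      calc a i ≤ ∑ i', a i' := Finset.single_le_sum (fun i' _ => ha i') (Finset.mem_univ i)
        _ = HW (u j) := hHz.symm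
        _ ≤ c := hj
    · intro i _
      rw [hKWK]
      exact Set.mem_image_of_mem e (hκ i)
    · rw [← hze, hsum, map_sum]
      apply Finset.sum_congr rfl
      intro i _
      rw [map_smul]
  have hpTc : p ∈ Tc := hTcc.isClosed.mem_of_tendsto hulim humem
  obtain ⟨⟨a, κW⟩, hmem, hpeq⟩ := hpTc
  rw [Set.mem_prod] at hmem
  obtain ⟨haIcc, hκW⟩ := hmem
  have hκ' : ∀ i, ∃ κ ∈ K, e κ = κW i := by
    intro i
    have hh := hκW i (Set.mem_univ i)
    rw [hKWK] at hh
    obtain ⟨κ, hκm, hκe⟩ := hh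
    exact ⟨κ, hκm, hκe⟩
  choose κ hκK hκe using hκ'
  have hsymm : e.symm p = ∑ i, a i • κ i := by
    rw [← hpeq, map_sum]
    apply Finset.sum_congr rfl
    intro i _
    dsimp only
    rw [map_smul, ← hκe i, e.symm_apply_apply]
  refine ⟨e.symm p, ?_, e.apply_symm_apply p⟩
  rw [hsymm]
  exact TMEM a κ (fun i => (haIcc i (Set.mem_univ i)).1) hκK

end Aux6
/-- If `C1` and `C2` are proper cones, then both their minimal and maximal tensor
products are proper cones. -/
theorem stmt3 {V1 V2 : Type*} [AddCommGroup V1] [Module ℝ V1] [FiniteDimensional ℝ V1]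
    [AddCommGroup V2] [Module ℝ V2] [FiniteDimensional ℝ V2]
    (C1 : Set V1) (C2 : Set V2)
    (h1 : IsProperCone C1) (h2 : IsProperCone C2) :
    IsProperCone (minTensor C1 C2) ∧ IsProperCone (maxTensor C1 C2) := by
  constructor
  · refine ⟨minTensor_convex C1 C2, minTensor_isClosedSet h1 h2,
      minTensor_coneSet h1.2.2.1, ?_, span_minTensor h1.2.2.2.2 h2.2.2.2.2⟩
    apply Set.Subset.antisymm
    · intro z hz
      have hmem : z ∈ maxTensor C1 C2 ∩ (-(maxTensor C1 C2)) :=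
        ⟨minTensor_subset_maxTensor hz.1, by
          rw [Set.mem_neg]
          exact minTensor_subset_maxTensor (Set.mem_neg.mp hz.2)⟩
      rw [maxTensor_salient h1 h2] at hmem
      exact hmem
    · intro z hz
      rw [Set.mem_singleton_iff] at hz
      subst hz
      have h0 := zero_mem_minTensor (zero_mem_of_proper h1) (zero_mem_of_proper h2)
      exact ⟨h0, by rw [Set.mem_neg, neg_zero]; exact h0⟩
  · refine ⟨maxTensor_convex C1 C2, maxTensor_isClosedSet C1 C2,
      maxTensor_coneSet C1 C2, maxTensor_salient h1 h2, ?_⟩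
    rw [eq_top_iff, ← span_minTensor h1.2.2.2.2 h2.2.2.2.2]
    exact Submodule.span_mono minTensor_subset_maxTensor
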